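/- If O is a valuation ring of a field K that is relatively separably algebraically closed in a field extension L, and O' is a henselian valuation ring of L with O' ∩ K = O, then O is henselian. -/

import Mathlib

/-- If `K` is relatively separably algebraically closed in a field extension `L`
(every element of `L` separable algebraic over `K` lies in `K`), `O'` is a henselian
valuation ring of `L`, and `O = O' ∩ K` is the induced valuation ring of `K`, then
`O` is henselian. -/
theorem restriction_henselian_of_sep_alg_closed
    {K L : Type*} [Field K] [Field L] [Algebra K L]
    (hsac : ∀ x : L, IsIntegral K x → (minpoly K x).Separable →
      x ∈ (algebraMap K L).range)
    (O' : ValuationSubring L) (hhens : HenselianLocalRing O') :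
    HenselianLocalRing (O'.comap (algebraMap K L)) := by
  set O := O'.comap (algebraMap K L) with hO
  have hinj : Function.Injective (algebraMap K L) := (algebraMap K L).injective
  let ψ : O →+* O' :=
    ((algebraMap K L).comp (SubringClass.subtype O)).codRestrict O' (fun x => x.2)
  have hψcoe : ∀ x : O, (ψ x : L) = algebraMap K L (x : K) := fun x => rfl
  have hψinj : Function.Injective ψ := fun a b h =>
    Subtype.ext (hinj (congrArg Subtype.val h))
  -- unit transfer
  have hunit : ∀ x : O, IsUnit (ψ x) → IsUnit x := by
    intro x hx
    rcases hx with ⟨u, hu⟩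
    have hx0 : (x : K) ≠ 0 := by
      intro h
      have h0 : ψ x = 0 := by
        ext
        rw [hψcoe, h, map_zero]; rfl
      rw [h0] at hu
      exact u.ne_zero hu
    have hy : ((↑u⁻¹ : O') : L) * algebraMap K L (x : K) = 1 := by
      have := congrArg (Subtype.val) (u.inv_mul)
      rw [hu] at this
      simpa [hψcoe] using this
    have hyval : ((↑u⁻¹ : O') : L) = (algebraMap K L (x : K))⁻¹ :=
      eq_inv_of_mul_eq_one_left hy
    have hzmem : (x : K)⁻¹ ∈ O := by
      show (x : K)⁻¹ ∈ O'.comap (algebraMap K L)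
      rw [ValuationSubring.mem_comap, map_inv₀, ← hyval]
      exact (↑u⁻¹ : O').2
    refine IsUnit.of_mul_eq_one (a := x) ⟨(x : K)⁻¹, hzmem⟩ (Subtype.ext ?_)
    exact mul_inv_cancel₀ hx0
  have hmem : ∀ x : O, x ∈ IsLocalRing.maximalIdeal O ↔ ψ x ∈ IsLocalRing.maximalIdeal O' := by
    intro x
    rw [IsLocalRing.mem_maximalIdeal, IsLocalRing.mem_maximalIdeal,
      mem_nonunits_iff, mem_nonunits_iff]
    exact ⟨fun h h' => h (hunit x h'), fun h h' => h (h'.map ψ)⟩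
  refine { is_henselian := ?_ }
  intro f hf a₀ h₁ h₂
  obtain ⟨b, hb, hb'⟩ := hhens.is_henselian (f.map ψ) (hf.map ψ) (ψ a₀)
    (by rw [Polynomial.eval_map, Polynomial.eval₂_hom]; exact (hmem _).mp h₁)
    (by rw [Polynomial.derivative_map, Polynomial.eval_map, Polynomial.eval₂_hom]
        exact h₂.map ψ)
  -- derivative at b is a unit
  have hub : IsUnit ((f.map ψ).derivative.eval b) := by
    have h4 : IsUnit ((f.map ψ).derivative.eval (ψ a₀)) := by
      rw [Polynomial.derivative_map, Polynomial.eval_map, Polynomial.eval₂_hom]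
      exact h₂.map ψ
    by_contra hcontra
    have h5 : (f.map ψ).derivative.eval b ∈ IsLocalRing.maximalIdeal O' := by
      rw [IsLocalRing.mem_maximalIdeal, mem_nonunits_iff]; exact hcontra
    have h3 : (f.map ψ).derivative.eval b - (f.map ψ).derivative.eval (ψ a₀) ∈
        IsLocalRing.maximalIdeal O' := by
      obtain ⟨c, hc⟩ := Polynomial.sub_dvd_eval_sub b (ψ a₀) (f.map ψ).derivative
      rw [hc]; exact Ideal.mul_mem_right _ _ hb'
    have h6 := Ideal.sub_mem _ h5 h3
    rw [sub_sub_cancel] at h6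
    rw [IsLocalRing.mem_maximalIdeal, mem_nonunits_iff] at h6
    exact h6 h4
  -- pass to L
  set β : L := (b : L) with hβ
  set g : Polynomial K := f.map (SubringClass.subtype O) with hg
  have hmapmap : g.map (algebraMap K L) = (f.map ψ).map (SubringClass.subtype O') := by
    rw [hg, Polynomial.map_map, Polynomial.map_map]
    rfl
  have hgval : Polynomial.aeval β g = 0 := by
    rw [Polynomial.aeval_def, ← Polynomial.eval_map, hmapmap, Polynomial.eval_map]
    show Polynomial.eval₂ (SubringClass.subtype O') (SubringClass.subtype O' b) _ = 0
    rw [Polynomial.eval₂_hom, hb]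
    rfl
  have hint : IsIntegral K β := ⟨g, hf.map _, by rwa [Polynomial.aeval_def] at hgval⟩
  have hgder : Polynomial.aeval β (Polynomial.derivative g) ≠ 0 := by
    have : Polynomial.aeval β (Polynomial.derivative g) =
        (((f.map ψ).derivative.eval b : O') : L) := by
      rw [Polynomial.aeval_def, ← Polynomial.eval_map, ← Polynomial.derivative_map, hmapmap,
        Polynomial.derivative_map, Polynomial.eval_map]
      show Polynomial.eval₂ (SubringClass.subtype O') (SubringClass.subtype O' b) _ = _
      rw [Polynomial.eval₂_hom]
      rfl
    rw [this]
    exact_mod_cast fun h => hub.ne_zero (Subtype.ext h)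
  have hsep : (minpoly K β).Separable := by
    obtain ⟨q, hq⟩ := minpoly.dvd K β hgval
    have hμ' : Polynomial.derivative (minpoly K β) ≠ 0 := by
      intro h0
      apply hgder
      rw [hq, Polynomial.derivative_mul, map_add, map_mul, map_mul, h0, map_zero,
        zero_mul, minpoly.aeval, zero_mul, add_zero]
    exact (Polynomial.separable_iff_derivative_ne_zero (minpoly.irreducible hint)).mpr hμ'
  obtain ⟨a, ha⟩ := hsac β hint hsep
  have haO : a ∈ O := by
    show a ∈ O'.comap (algebraMap K L)
    rw [ValuationSubring.mem_comap, ha]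
    exact b.2
  set A : O := ⟨a, haO⟩ with hA
  have hψA : ψ A = b := Subtype.ext (by rw [hψcoe]; exact ha)
  refine ⟨A, ?_, ?_⟩
  · have : ψ (f.eval A) = ψ 0 := by
      rw [map_zero, ← Polynomial.eval₂_hom, ← Polynomial.eval_map, hψA]
      exact hb
    exact hψinj this
  · rw [hmem, map_sub, hψA]
    exact hb'
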